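/- Let C be a class of finite simple graphs that is closed under isomorphism and under taking induced subgraphs. If there is a real α such that every graph in C has average cut-rank at most α, then there exist finitely many graphs H₁, …, H_k such that a graph G belongs to C if and only if G has no induced subgraph isomorphic to any H_i. -/

import Mathlib

open scoped Classical

namespace AvgCutRank

variable {V : Type*} {W : Type*}

/-- Local complementation of `G` at a vertex `v`: complement the adjacency inside
the neighborhood of `v`. -/
def localComp (G : SimpleGraph V) (v : V) : SimpleGraph V where
  Adj x y := x ≠ y ∧ (G.Adj x y ↔ ¬(G.Adj v x ∧ G.Adj v y))
  symm := by
    constructor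
    rintro x y ⟨hxy, h⟩
    refine ⟨hxy.symm, ?_⟩
    rw [G.adj_comm y x, and_comm]
    exact h
  loopless := ⟨fun x h => h.1 rfl⟩

/-- Two graphs on the same vertex set are locally equivalent if one is obtained from
the other by a sequence of local complementations. -/
def LocallyEquivalent (G H : SimpleGraph V) : Prop :=
  Relation.ReflTransGen (fun A B => ∃ v, B = localComp A v) G H

/-- `H` is (isomorphic to) a vertex-minor of `G`: `H` is isomorphic to an induced
subgraph of a graph locally equivalent to `G`. -/
def IsVertexMinor (H : SimpleGraph W) (G : SimpleGraph V) : Prop :=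
  ∃ (G' : SimpleGraph V) (s : Set V), LocallyEquivalent G G' ∧ Nonempty (H ≃g G'.induce s)

/-- The cut-rank of a set `X` of vertices: the rank over GF(2) of the `X × Xᶜ`
adjacency submatrix. -/
noncomputable def cutRank [Fintype V] [DecidableEq V] (G : SimpleGraph V)
    (X : Finset V) : ℕ :=
  (Matrix.of fun (i : X) (j : (Xᶜ : Finset V)) =>
    if G.Adj i.1 j.1 then (1 : ZMod 2) else 0).rank

/-- The average cut-rank of a graph. -/
noncomputable def avgCutRank [Fintype V] [DecidableEq V] (G : SimpleGraph V) : ℝ :=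
  (∑ X : Finset V, (cutRank G X : ℝ)) / 2 ^ Fintype.card V

/-- The maximum cut-rank of a graph. -/
noncomputable def maxCutRank [Fintype V] [DecidableEq V] (G : SimpleGraph V) : ℕ :=
  Finset.univ.sup (cutRank G)

/-- `x` and `y` are equal or twins: they have the same neighbors outside `{x, y}`. -/
def TwinEq (G : SimpleGraph V) (x y : V) : Prop :=
  x = y ∨ ∀ z, z ≠ x → z ≠ y → (G.Adj x z ↔ G.Adj y z)

/-- `x` and `y` are twins. -/
def IsTwins (G : SimpleGraph V) (x y : V) : Prop :=
  x ≠ y ∧ ∀ z, z ≠ x → z ≠ y → (G.Adj x z ↔ G.Adj y z)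

/-- Neighborhood diversity: the number of twin classes. -/
noncomputable def nd [Fintype V] [DecidableEq V] (G : SimpleGraph V) : ℕ :=
  (Finset.univ.image fun x => Finset.univ.filter fun y => TwinEq G x y).card

/-- The minimum rank of a graph over a field `F`. -/
noncomputable def minRank (F : Type*) [Field F] [Fintype V] [DecidableEq V]
    (G : SimpleGraph V) : ℕ :=
  sInf { r : ℕ | ∃ A : Matrix V V F, A.IsSymm ∧
    (∀ i j, i ≠ j → (A i j ≠ 0 ↔ G.Adj i j)) ∧ A.rank = r }

/-- The clique delta-cover number: the minimum `t` such that the edge set of `G` is the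
symmetric difference of the edge sets of `t` complete graphs (given by their vertex sets). -/
noncomputable def cliqueDeltaCover [Fintype V] [DecidableEq V] (G : SimpleGraph V) : ℕ :=
  sInf { t : ℕ | ∃ S : Fin t → Finset V, ∀ x y : V, x ≠ y →
    (G.Adj x y ↔ Odd (Finset.univ.filter fun i => x ∈ S i ∧ y ∈ S i).card) }

/-- `C` is the vertex set of an attached star in `G`: the subgraph induced on `C` is a
star (with center `c`) all of whose noncentral vertices are leaves of `G`. -/
def IsAttachedStar (G : SimpleGraph V) (C : Set V) : Prop :=
  ∃ c ∈ C, (∃ x ∈ C, x ≠ c) ∧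
    ∀ x ∈ C, x ≠ c → G.Adj c x ∧ ∀ y, G.Adj x y → y = c

/-- Deletion of a vertex: the induced subgraph on the complement of `{v}`. -/
def deleteVert (G : SimpleGraph V) (v : V) : SimpleGraph {w : V // w ≠ v} :=
  SimpleGraph.comap Subtype.val G

/-- Deletion of a finite set of vertices. -/
def deleteVerts (G : SimpleGraph V) (T : Finset V) : SimpleGraph {w : V // w ∉ T} :=
  SimpleGraph.comap Subtype.val G

/-- The star `K_{1,m}` with center `0`. -/
def starGraph (m : ℕ) : SimpleGraph (Fin (m + 1)) :=
  SimpleGraph.fromRel fun x _ => x = 0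

/-- The disjoint union of three copies of `K₂`. -/
def threeK2 : SimpleGraph (Fin 6) :=
  SimpleGraph.fromRel fun x y =>
    (x = 0 ∧ y = 1) ∨ (x = 2 ∧ y = 3) ∨ (x = 4 ∧ y = 5)

/-- The disjoint union of two paths on three vertices. -/
def twoP3 : SimpleGraph (Fin 6) :=
  SimpleGraph.fromRel fun x y =>
    (x = 0 ∧ y = 1) ∨ (x = 1 ∧ y = 2) ∨ (x = 3 ∧ y = 4) ∨ (x = 4 ∧ y = 5)

/-- The disjoint union of `K₂` and the star `K_{1,k+1}`. -/
def K2PlusStar (k : ℕ) : SimpleGraph (Fin (k + 4)) :=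
  SimpleGraph.fromRel fun x y => (x.val = 0 ∧ y.val = 1) ∨ (x.val = 2 ∧ 3 ≤ y.val)

/-- `E_k`: the star `K_{1,k+1}` with one edge subdivided. Vertex `0` is the center,
`1` is the subdivision vertex, `2` is the leaf behind it, `3, …, k+2` are leaves. -/
def Egraph (k : ℕ) : SimpleGraph (Fin (k + 3)) :=
  SimpleGraph.fromRel fun x y =>
    (x.val = 0 ∧ y.val = 1) ∨ (x.val = 1 ∧ y.val = 2) ∨ (x.val = 0 ∧ 3 ≤ y.val)

/-- Finite graphs represented on the vertex sets `Fin n`. -/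
abbrev GraphOn := Σ n : ℕ, SimpleGraph (Fin n)

/-- `H` is isomorphic to an induced subgraph of `G`. -/
def IsIndSubgraph (H G : GraphOn) : Prop :=
  ∃ s : Set (Fin G.1), Nonempty (H.2 ≃g G.2.induce s)

/-- The sequence `x_n(ε)` from the paper. -/
noncomputable def xseq (ε : ℝ) : ℕ → ℤ
  | 0 => max ⌊2 - Real.logb 2 (1 - ε)⌋ 5
  | n + 1 => 2 ^ (8 * (n + 1) + 10) *
      ⌊(xseq ε n : ℝ) - Real.logb 2 (1 - Int.fract ((2 : ℝ) ^ (xseq ε n) * ε / 2)) + 1⌋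


def Emb (H G : GraphOn) : Prop :=
  ∃ f : Fin H.1 → Fin G.1, Function.Injective f ∧ ∀ u v, H.2.Adj u v ↔ G.2.Adj (f u) (f v)

lemma emb_refl (G : GraphOn) : Emb G G := ⟨id, fun _ _ h => h, fun _ _ => Iff.rfl⟩

lemma emb_trans {A B C : GraphOn} (h1 : Emb A B) (h2 : Emb B C) : Emb A C := by
  obtain ⟨f, hf, haf⟩ := h1
  obtain ⟨g, hg, hag⟩ := h2
  exact ⟨g ∘ f, hg.comp hf, fun u v => (haf u v).trans (hag _ _)⟩

lemma indSubgraph_iff_emb {H G : GraphOn} : IsIndSubgraph H G ↔ Emb H G := by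
  constructor
  · rintro ⟨s, ⟨φ⟩⟩
    refine ⟨fun v => (φ v).1, Subtype.val_injective.comp φ.toEquiv.injective, fun u v => ?_⟩
    rw [← φ.map_rel_iff]
    rfl
  · rintro ⟨f, hf, ha⟩
    refine ⟨Set.range f, ⟨⟨Equiv.ofInjective f hf, fun {a b} => ?_⟩⟩⟩
    exact ((ha a b).symm)

lemma emb_of_iso {A B : GraphOn} (h : Nonempty (A.2 ≃g B.2)) : Emb A B := by
  obtain ⟨φ⟩ := h
  exact ⟨φ, φ.toEquiv.injective, fun u v => φ.map_rel_iff.symm⟩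


variable {G : SimpleGraph V}

lemma twinEq_refl (x : V) : TwinEq G x x := Or.inl rfl

lemma twinEq_symm {x y : V} (h : TwinEq G x y) : TwinEq G y x := by
  rcases h with h | h
  · exact Or.inl h.symm
  · exact Or.inr fun z hzy hzx => (h z hzx hzy).symm

lemma twinEq_adj {x y z : V} (h : TwinEq G x y) (hzx : z ≠ x) (hzy : z ≠ y) :
    G.Adj x z ↔ G.Adj y z := by
  rcases h with h | h
  · subst h; rfl
  · exact h z hzx hzy

lemma twinEq_trans {x y z : V} (h1 : TwinEq G x y) (h2 : TwinEq G y z) : TwinEq G x z := by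
  rcases eq_or_ne x y with rfl | hxy
  · exact h2
  rcases eq_or_ne y z with rfl | hyz
  · exact h1
  rcases eq_or_ne x z with rfl | hxz
  · exact Or.inl rfl
  refine Or.inr fun w hwx hwz => ?_
  rcases eq_or_ne w y with rfl | hwy
  · -- goal : Adj x w ↔ Adj z w with w = y
    have e1 : G.Adj x z ↔ G.Adj w z := twinEq_adj h1 (Ne.symm hxz) (Ne.symm hyz)
    have e2 : G.Adj w x ↔ G.Adj z x := twinEq_adj h2 hxy hxz
    rw [G.adj_comm x w, e2, G.adj_comm z x, e1, G.adj_comm w z]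
  · exact (twinEq_adj h1 hwx hwy).trans (twinEq_adj h2 hwy hwz)


section Classes
variable {n : ℕ}

noncomputable def cls (G : SimpleGraph (Fin n)) (v : Fin n) : Finset (Fin n) :=
  Finset.univ.filter (fun w => TwinEq G v w)

lemma mem_cls {G : SimpleGraph (Fin n)} {v w : Fin n} : w ∈ cls G v ↔ TwinEq G v w := by
  simp [cls]

lemma self_mem_cls {G : SimpleGraph (Fin n)} {v : Fin n} : v ∈ cls G v :=
  mem_cls.2 (twinEq_refl v)

lemma cls_eq_of_twinEq {G : SimpleGraph (Fin n)} {v w : Fin n} (h : TwinEq G v w) :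
    cls G v = cls G w := by
  ext z
  simp only [mem_cls]
  exact ⟨fun hz => twinEq_trans (twinEq_symm h) hz, fun hz => twinEq_trans h hz⟩

lemma twinEq_of_cls_eq {G : SimpleGraph (Fin n)} {v w : Fin n} (h : cls G v = cls G w) :
    TwinEq G v w := by
  have : w ∈ cls G v := h ▸ self_mem_cls
  exact mem_cls.1 this

lemma cls_eq_of_mem {G : SimpleGraph (Fin n)} {v w : Fin n} (h : w ∈ cls G v) :
    cls G w = cls G v := (cls_eq_of_twinEq (mem_cls.1 h)).symm

noncomputable def rep (G : SimpleGraph (Fin n)) (v : Fin n) : Fin n :=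
  (cls G v).min' ⟨v, self_mem_cls⟩

lemma rep_mem_cls {G : SimpleGraph (Fin n)} {v : Fin n} : rep G v ∈ cls G v :=
  Finset.min'_mem _ _

lemma twinEq_rep {G : SimpleGraph (Fin n)} (v : Fin n) : TwinEq G v (rep G v) :=
  mem_cls.1 rep_mem_cls

lemma cls_rep {G : SimpleGraph (Fin n)} (v : Fin n) : cls G (rep G v) = cls G v :=
  cls_eq_of_mem rep_mem_cls

lemma rep_eq_of_cls_eq {G : SimpleGraph (Fin n)} {v w : Fin n} (h : cls G v = cls G w) :
    rep G v = rep G w := by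
  unfold rep
  congr 1

lemma rep_rep {G : SimpleGraph (Fin n)} (v : Fin n) : rep G (rep G v) = rep G v :=
  rep_eq_of_cls_eq (cls_rep v)

lemma rep_eq_of_twinEq {G : SimpleGraph (Fin n)} {v w : Fin n} (h : TwinEq G v w) :
    rep G v = rep G w := rep_eq_of_cls_eq (cls_eq_of_twinEq h)

lemma rep_eq_of_mem {G : SimpleGraph (Fin n)} {v w : Fin n} (h : w ∈ cls G v) :
    rep G w = rep G v := rep_eq_of_cls_eq (cls_eq_of_mem h)

noncomputable def DD (G : SimpleGraph (Fin n)) : Finset (Fin n) :=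
  Finset.univ.filter (fun v => rep G v = v)

noncomputable def qq (G : SimpleGraph (Fin n)) : ℕ := (DD G).card

lemma mem_DD {G : SimpleGraph (Fin n)} {v : Fin n} : v ∈ DD G ↔ rep G v = v := by
  simp [DD]

lemma rep_mem_DD {G : SimpleGraph (Fin n)} (v : Fin n) : rep G v ∈ DD G :=
  mem_DD.2 (rep_rep v)

lemma DD_pairwise_nontwin {G : SimpleGraph (Fin n)} {u v : Fin n}
    (hu : u ∈ DD G) (hv : v ∈ DD G) (h : TwinEq G u v) : u = v := by
  rw [← mem_DD.1 hu, ← mem_DD.1 hv]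
  exact rep_eq_of_twinEq h

lemma cls_disjoint {G : SimpleGraph (Fin n)} {u v w : Fin n}
    (hu : w ∈ cls G u) (hv : w ∈ cls G v) : cls G u = cls G v := by
  rw [← cls_eq_of_mem hu, cls_eq_of_mem hv]

-- the label proposition for a class (base point r)
def LabelP (G : SimpleGraph (Fin n)) (r : Fin n) : Prop :=
  ∃ y ∈ cls G r, y ≠ r ∧ G.Adj r y

lemma adj_base {G : SimpleGraph (Fin n)} {r v : Fin n} (hv : v ∈ cls G r) (hvr : v ≠ r) :
    G.Adj r v ↔ LabelP G r := by
  constructor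
  · exact fun h => ⟨v, hv, hvr, h⟩
  · rintro ⟨y, hy, hyr, hadj⟩
    rcases eq_or_ne y v with rfl | hyv
    · exact hadj
    · have ht : TwinEq G y v := twinEq_trans (twinEq_symm (mem_cls.1 hy)) (mem_cls.1 hv)
      have := twinEq_adj ht (Ne.symm hyr) (Ne.symm hvr)
      rw [G.adj_comm y r, G.adj_comm v r] at this
      exact this.1 hadj

lemma adj_in_cls {G : SimpleGraph (Fin n)} {r u v : Fin n}
    (hu : u ∈ cls G r) (hv : v ∈ cls G r) (huv : u ≠ v) :
    G.Adj u v ↔ LabelP G r := by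
  rcases eq_or_ne u r with rfl | hur
  · exact adj_base hv (Ne.symm huv)
  rcases eq_or_ne v r with rfl | hvr
  · rw [G.adj_comm]; exact adj_base hu huv
  · have ht : TwinEq G u r := twinEq_symm (mem_cls.1 hu)
    have step : G.Adj u v ↔ G.Adj r v := twinEq_adj ht (Ne.symm huv) hvr
    rw [step]
    exact adj_base hv hvr

lemma adj_out {G : SimpleGraph (Fin n)} {r u w : Fin n}
    (hu : u ∈ cls G r) (hw : w ∉ cls G r) : G.Adj u w ↔ G.Adj r w := by
  have hwr : w ≠ r := fun h => hw (h ▸ self_mem_cls)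
  have hwu : w ≠ u := fun h => hw (h ▸ hu)
  rcases eq_or_ne u r with rfl | hur
  · rfl
  · exact twinEq_adj (twinEq_symm (mem_cls.1 hu)) hwu hwr

end Classes


section Profile
variable {n : ℕ}

noncomputable def eD (G : SimpleGraph (Fin n)) : Fin (qq G) → Fin n :=
  fun k => ((DD G).orderIsoOfFin rfl k : Fin n)

lemma eD_mem (G : SimpleGraph (Fin n)) (k : Fin (qq G)) : eD G k ∈ DD G :=
  ((DD G).orderIsoOfFin rfl k).2

lemma eD_inj {G : SimpleGraph (Fin n)} : Function.Injective (eD G) := fun k l h =>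
  ((DD G).orderIsoOfFin rfl).injective (Subtype.ext h)

lemma rep_eD (G : SimpleGraph (Fin n)) (k : Fin (qq G)) : rep G (eD G k) = eD G k :=
  mem_DD.1 (eD_mem G k)

noncomputable def idxOf (G : SimpleGraph (Fin n)) (v : Fin n) : Fin (qq G) :=
  ((DD G).orderIsoOfFin rfl).symm ⟨rep G v, rep_mem_DD v⟩

lemma eD_idxOf (G : SimpleGraph (Fin n)) (v : Fin n) : eD G (idxOf G v) = rep G v := by
  show (((DD G).orderIsoOfFin rfl) (((DD G).orderIsoOfFin rfl).symm ⟨rep G v, rep_mem_DD v⟩) : Fin n) = _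
  rw [OrderIso.apply_symm_apply]

variable (K : ℕ)

noncomputable def sigK (G : SimpleGraph (Fin n)) : Fin K → ℕ :=
  fun i => if h : (i : ℕ) < qq G then (cls G (eD G ⟨i, h⟩)).card else 0

noncomputable def adjB (G : SimpleGraph (Fin n)) : Fin K → Fin K → Bool := fun i j =>
  if h : (i : ℕ) < qq G ∧ (j : ℕ) < qq G then
    (if G.Adj (eD G ⟨i, h.1⟩) (eD G ⟨j, h.2⟩) then true else false) else false

noncomputable def labB (G : SimpleGraph (Fin n)) : Fin K → Bool := fun i =>
  if h : (i : ℕ) < qq G then (if LabelP G (eD G ⟨i, h⟩) then true else false) else false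

lemma sigK_pad {G : SimpleGraph (Fin n)} (hq : qq G ≤ K) (k : Fin (qq G)) :
    sigK K G ⟨k.1, lt_of_lt_of_le k.2 hq⟩ = (cls G (eD G k)).card := by
  have h : ((⟨k.1, lt_of_lt_of_le k.2 hq⟩ : Fin K) : ℕ) < qq G := k.2
  rw [sigK, dif_pos h]

lemma adjB_pad {G : SimpleGraph (Fin n)} (hq : qq G ≤ K) (k l : Fin (qq G)) :
    adjB K G ⟨k.1, lt_of_lt_of_le k.2 hq⟩ ⟨l.1, lt_of_lt_of_le l.2 hq⟩
      = (if G.Adj (eD G k) (eD G l) then true else false) := by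
  have h : ((⟨k.1, lt_of_lt_of_le k.2 hq⟩ : Fin K) : ℕ) < qq G ∧
      ((⟨l.1, lt_of_lt_of_le l.2 hq⟩ : Fin K) : ℕ) < qq G := ⟨k.2, l.2⟩
  rw [adjB, dif_pos h]

lemma labB_pad {G : SimpleGraph (Fin n)} (hq : qq G ≤ K) (k : Fin (qq G)) :
    labB K G ⟨k.1, lt_of_lt_of_le k.2 hq⟩ = (if LabelP G (eD G k) then true else false) := by
  have h : ((⟨k.1, lt_of_lt_of_le k.2 hq⟩ : Fin K) : ℕ) < qq G := k.2
  rw [labB, dif_pos h]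

lemma bool_iff {P Q : Prop} (h : (if P then true else false) = (if Q then true else false)) :
    P ↔ Q := by
  by_cases hP : P <;> by_cases hQ : Q <;> simp_all

lemma biUnion_cls (G : SimpleGraph (Fin n)) : (DD G).biUnion (cls G) = Finset.univ := by
  ext v
  simp only [Finset.mem_biUnion, Finset.mem_univ, iff_true]
  exact ⟨rep G v, rep_mem_DD v, by rw [cls_rep]; exact self_mem_cls⟩

lemma sum_card_cls (G : SimpleGraph (Fin n)) : ∑ x ∈ DD G, (cls G x).card = n := by
  rw [← Finset.card_biUnion, biUnion_cls, Finset.card_univ, Fintype.card_fin]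
  intro x hx y hy hxy
  simp only [Finset.disjoint_left]
  intro w hwx hwy
  apply hxy
  rw [← mem_DD.1 hx, ← mem_DD.1 hy, ← rep_eq_of_mem hwx, rep_eq_of_mem hwy]

lemma sum_sigK {G : SimpleGraph (Fin n)} (hq : qq G ≤ K) : ∑ i : Fin K, sigK K G i = n := by
  have h0 : ∑ i ∈ Finset.univ.filter (fun i : Fin K => (i : ℕ) < qq G), sigK K G i
      = ∑ i : Fin K, sigK K G i := by
    apply Finset.sum_filter_of_ne
    intro i _ hne
    by_contra hcon
    exact hne (by rw [sigK, dif_neg hcon])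
  have h1 : ∑ i ∈ Finset.univ.filter (fun i : Fin K => (i : ℕ) < qq G), sigK K G i
      = ∑ k : Fin (qq G), (cls G (eD G k)).card := by
    refine Finset.sum_bij' (fun i hi => (⟨i.1, by simpa using hi⟩ : Fin (qq G)))
      (fun k _ => (⟨k.1, lt_of_lt_of_le k.2 hq⟩ : Fin K)) ?_ ?_ ?_ ?_ ?_
    · intro i hi
      exact Finset.mem_univ _
    · intro k _
      simp [k.2]
    · intro i hi
      exact Fin.ext rfl
    · intro k _
      exact Fin.ext rfl
    · intro i hi
      have hi' : (i : ℕ) < qq G := by simpa using hi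
      have := sigK_pad K hq (⟨i.1, hi'⟩ : Fin (qq G))
      simpa using this
  have h2 : ∑ k : Fin (qq G), (cls G (eD G k)).card = ∑ x ∈ DD G, (cls G x).card := by
    refine Finset.sum_bij (fun k _ => eD G k) ?_ ?_ ?_ ?_
    · intro k _
      exact eD_mem G k
    · intro k _ l _ h
      exact eD_inj h
    · intro x hx
      refine ⟨((DD G).orderIsoOfFin rfl).symm ⟨x, hx⟩, Finset.mem_univ _, ?_⟩
      show (((DD G).orderIsoOfFin rfl) (((DD G).orderIsoOfFin rfl).symm ⟨x, hx⟩) : Fin n) = x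
      rw [OrderIso.apply_symm_apply]
    · intro k _
      rfl
  rw [h0] at h1
  rw [h1, h2, sum_card_cls]

lemma orderIso_val_inj {N : ℕ} {s t : Finset (Fin N)} (hst : s = t) {p : Fin s.card}
    {r : Fin t.card} (h : ((s.orderIsoOfFin rfl p : Fin N)) = (t.orderIsoOfFin rfl r : Fin N)) :
    (p : ℕ) = (r : ℕ) := by
  subst hst
  exact congrArg Fin.val ((s.orderIsoOfFin rfl).injective (Subtype.ext h))

lemma pos_inj {N : ℕ} {s t : Finset (Fin N)} (hst : s = t) {x y : Fin N} (hx : x ∈ s)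
    (hy : y ∈ t)
    (h : (((s.orderIsoOfFin rfl).symm ⟨x, hx⟩ : Fin s.card) : ℕ)
        = (((t.orderIsoOfFin rfl).symm ⟨y, hy⟩ : Fin t.card) : ℕ)) : x = y := by
  subst hst
  have h2 : ((s.orderIsoOfFin rfl).symm ⟨x, hx⟩) = ((s.orderIsoOfFin rfl).symm ⟨y, hy⟩) :=
    Fin.ext h
  have h3 := congrArg (s.orderIsoOfFin rfl) h2
  rw [OrderIso.apply_symm_apply, OrderIso.apply_symm_apply] at h3
  exact congrArg Subtype.val h3

lemma embed_of_code {n' : ℕ} {G : SimpleGraph (Fin n)} {G' : SimpleGraph (Fin n')}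
    (hq : qq G ≤ K) (hq' : qq G' ≤ K)
    (h1 : qq G = qq G') (h2 : adjB K G = adjB K G') (h3 : labB K G = labB K G')
    (hs : ∀ i, sigK K G i ≤ sigK K G' i) :
    ∃ f : Fin n → Fin n', Function.Injective f ∧
      (∀ u v, G.Adj u v ↔ G'.Adj (f u) (f v)) ∧
      ((∀ i, sigK K G i = sigK K G' i) → Function.Bijective f) := by
  classical
  -- representative in G' for the class of v
  set R' : Fin n → Fin n' := fun v => eD G' (Fin.cast h1 (idxOf G v)) with hR'
  have hRDD : ∀ v, R' v ∈ DD G' := fun v => eD_mem G' _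
  have hRinj' : ∀ u v, R' u = R' v → rep G u = rep G v := by
    intro u v h
    have h5 := eD_inj h
    have h6 : idxOf G u = idxOf G v := Fin.cast_injective h1 h5
    rw [← eD_idxOf G u, ← eD_idxOf G v, h6]
  have hReq : ∀ u v, rep G u = rep G v → R' u = R' v := by
    intro u v h
    have h5 : idxOf G u = idxOf G v := by
      unfold idxOf
      congr 1
      exact Subtype.ext h
    exact congrArg (fun k => eD G' (Fin.cast h1 k)) h5
  -- cardinality bound
  have hcard : ∀ v : Fin n, (cls G (rep G v)).card ≤ (cls G' (R' v)).card := by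
    intro v
    have e1 : sigK K G ⟨(idxOf G v).1, lt_of_lt_of_le (idxOf G v).2 hq⟩
        = (cls G (eD G (idxOf G v))).card := sigK_pad K hq _
    have e2 : sigK K G' ⟨(Fin.cast h1 (idxOf G v)).1,
        lt_of_lt_of_le (Fin.cast h1 (idxOf G v)).2 hq'⟩
        = (cls G' (eD G' (Fin.cast h1 (idxOf G v)))).card := sigK_pad K hq' _
    have hidx : (⟨(idxOf G v).1, lt_of_lt_of_le (idxOf G v).2 hq⟩ : Fin K)
        = ⟨(Fin.cast h1 (idxOf G v)).1, lt_of_lt_of_le (Fin.cast h1 (idxOf G v)).2 hq'⟩ :=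
      Fin.ext rfl
    have := hs ⟨(idxOf G v).1, lt_of_lt_of_le (idxOf G v).2 hq⟩
    rw [e1, hidx, e2] at this
    rw [eD_idxOf] at this
    exact this
  have hmemv : ∀ v : Fin n, v ∈ cls G (rep G v) := by
    intro v
    rw [cls_rep]
    exact self_mem_cls
  set pos : (v : Fin n) → Fin ((cls G (rep G v)).card) :=
    fun v => ((cls G (rep G v)).orderIsoOfFin rfl).symm ⟨v, hmemv v⟩ with hpos
  set f : Fin n → Fin n' := fun v =>
    ((cls G' (R' v)).orderIsoOfFin rfl
      ⟨(pos v : ℕ), lt_of_lt_of_le (pos v).2 (hcard v)⟩ : Fin n') with hf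
  have hfmem : ∀ v, f v ∈ cls G' (R' v) := fun v =>
    ((cls G' (R' v)).orderIsoOfFin rfl ⟨(pos v : ℕ), _⟩).2
  have hclsR : ∀ u v, cls G' (R' u) = cls G' (R' v) → rep G u = rep G v := by
    intro u v hC'
    have ht := twinEq_of_cls_eq hC'
    have h4 := rep_eq_of_twinEq ht
    rw [mem_DD.1 (hRDD u), mem_DD.1 (hRDD v)] at h4
    exact hRinj' u v h4
  have hinj : Function.Injective f := by
    intro u v h
    have hfvu : f u ∈ cls G' (R' v) := h ▸ hfmem v
    have hC' : cls G' (R' u) = cls G' (R' v) := cls_disjoint (hfmem u) hfvu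
    have hrep : rep G u = rep G v := hclsR u v hC'
    have hposval : ((pos u : ℕ)) = ((pos v : ℕ)) := orderIso_val_inj hC' h
    have hCG : cls G (rep G u) = cls G (rep G v) := by rw [hrep]
    exact pos_inj hCG (hmemv u) (hmemv v) hposval
  -- translation lemmas
  have htrA : ∀ k l : Fin (qq G),
      (G.Adj (eD G k) (eD G l) ↔ G'.Adj (eD G' (Fin.cast h1 k)) (eD G' (Fin.cast h1 l))) := by
    intro k l
    apply bool_iff
    have e1 := adjB_pad K hq k l
    have e2 := adjB_pad K hq' (Fin.cast h1 k) (Fin.cast h1 l)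
    have hidx1 : (⟨k.1, lt_of_lt_of_le k.2 hq⟩ : Fin K)
        = ⟨(Fin.cast h1 k).1, lt_of_lt_of_le (Fin.cast h1 k).2 hq'⟩ := Fin.ext rfl
    have hidx2 : (⟨l.1, lt_of_lt_of_le l.2 hq⟩ : Fin K)
        = ⟨(Fin.cast h1 l).1, lt_of_lt_of_le (Fin.cast h1 l).2 hq'⟩ := Fin.ext rfl
    rw [← e1, ← e2, hidx1, hidx2, h2]
  have htrL : ∀ k : Fin (qq G),
      (LabelP G (eD G k) ↔ LabelP G' (eD G' (Fin.cast h1 k))) := by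
    intro k
    apply bool_iff
    have e1 := labB_pad K hq k
    have e2 := labB_pad K hq' (Fin.cast h1 k)
    have hidx1 : (⟨k.1, lt_of_lt_of_le k.2 hq⟩ : Fin K)
        = ⟨(Fin.cast h1 k).1, lt_of_lt_of_le (Fin.cast h1 k).2 hq'⟩ := Fin.ext rfl
    rw [← e1, ← e2, hidx1, h3]
  have hadjrep : ∀ u v : Fin n,
      (G.Adj (rep G u) (rep G v) ↔ G'.Adj (R' u) (R' v)) := by
    intro u v
    have := htrA (idxOf G u) (idxOf G v)
    rwa [eD_idxOf, eD_idxOf] at this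
  have hlabrep : ∀ v : Fin n, (LabelP G (rep G v) ↔ LabelP G' (R' v)) := by
    intro v
    have := htrL (idxOf G v)
    rwa [eD_idxOf] at this
  refine ⟨f, hinj, ?_, ?_⟩
  · intro u v
    rcases eq_or_ne u v with rfl | huv
    · simp
    rcases eq_or_ne (rep G u) (rep G v) with hre | hre
    · -- same class
      have hv' : v ∈ cls G (rep G u) := by rw [hre]; exact hmemv v
      have lhs : G.Adj u v ↔ LabelP G (rep G u) := adj_in_cls (hmemv u) hv' huv
      have hRuv : R' u = R' v := hReq u v hre
      have hfv' : f v ∈ cls G' (R' u) := by rw [hRuv]; exact hfmem v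
      have rhs : G'.Adj (f u) (f v) ↔ LabelP G' (R' u) :=
        adj_in_cls (hfmem u) hfv' (fun hh => huv (hinj hh))
      rw [lhs, rhs]
      exact hlabrep u
    · -- different classes
      have hvnot : v ∉ cls G (rep G u) := by
        intro hmem
        exact hre ((rep_eq_of_mem hmem).trans (rep_rep u)).symm
      have hunot : rep G u ∉ cls G (rep G v) := by
        intro hmem
        exact hre ((rep_rep u).symm.trans ((rep_eq_of_mem hmem).trans (rep_rep v)))
      have hfvnot : f v ∉ cls G' (R' u) := fun hmem =>
        hre (hclsR u v (cls_disjoint hmem (hfmem v)))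
      have hfunot : R' u ∉ cls G' (R' v) := fun hmem =>
        hre (hclsR u v (cls_disjoint self_mem_cls hmem))
      have l1 : G.Adj u v ↔ G.Adj (rep G u) v := adj_out (hmemv u) hvnot
      have l2 : G.Adj v (rep G u) ↔ G.Adj (rep G v) (rep G u) := adj_out (hmemv v) hunot
      have r1 : G'.Adj (f u) (f v) ↔ G'.Adj (R' u) (f v) := adj_out (hfmem u) hfvnot
      have r2 : G'.Adj (f v) (R' u) ↔ G'.Adj (R' v) (R' u) := adj_out (hfmem v) hfunot
      rw [l1, G.adj_comm (rep G u) v, l2, G.adj_comm (rep G v) (rep G u), hadjrep u v,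
        r1, G'.adj_comm (R' u) (f v), r2, G'.adj_comm (R' v) (R' u)]
  · intro hsig
    have hnn : n = n' := by
      rw [← sum_sigK K hq, ← sum_sigK K hq']
      exact Finset.sum_congr rfl fun i _ => hsig i
    rw [Fintype.bijective_iff_injective_and_card]
    exact ⟨hinj, by simp [hnn]⟩

end Profile


def HasChain (G : SimpleGraph V) (m : ℕ) : Prop :=
  ∃ (z c : Fin m → V) (a : Fin m → Bool),
    Function.Injective z ∧ Function.Injective c ∧
    (∀ i, z i ≠ c i) ∧
    (∀ i, G.Adj (z i) (c i) ↔ a i = false) ∧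
    (∀ i j, i < j → z j ≠ c i → (G.Adj (z j) (c i) ↔ a i = true))

private def ChainIn (G : SimpleGraph V) (S : Finset V) (m : ℕ) : Prop :=
  ∃ (z c : Fin m → V) (a : Fin m → Bool),
    (∀ i, z i ∈ S) ∧
    (∀ i, ∃ p ∈ S, ∃ q ∈ S, G.Adj p (c i) ∧ ¬ G.Adj q (c i)) ∧
    Function.Injective z ∧ Function.Injective c ∧
    (∀ i, z i ≠ c i) ∧
    (∀ i, G.Adj (z i) (c i) ↔ a i = false) ∧
    (∀ i j, i < j → (G.Adj (z j) (c i) ↔ a i = true))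

lemma chainIn_of_card {G : SimpleGraph V} :
    ∀ (m : ℕ) (S : Finset V), (∀ u ∈ S, ∀ v ∈ S, TwinEq G u v → u = v) →
      2 ^ m ≤ S.card → ChainIn G S m := by
  intro m
  induction m with
  | zero =>
    intro S _ _
    exact ⟨fun i => i.elim0, fun i => i.elim0, fun i => i.elim0,
      fun i => i.elim0, fun i => i.elim0,
      by intro i; exact i.elim0, by intro i; exact i.elim0,
      fun i => i.elim0, fun i => i.elim0, fun i j => i.elim0⟩
  | succ m IH =>
    intro S hS hcard
    -- find two distinct elements
    have h2 : 1 < S.card := by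
      have : (2:ℕ) ≤ 2 ^ (m+1) := by
        have := Nat.pow_le_pow_right (show 1 ≤ 2 by norm_num) (show 1 ≤ m+1 by omega)
        simpa using this
      omega
    obtain ⟨u, hu, v, hv, huv⟩ := Finset.one_lt_card.1 h2
    have hnt : ¬ TwinEq G u v := fun h => huv (hS u hu v hv h)
    have hex : ∃ c, c ≠ u ∧ c ≠ v ∧ ((G.Adj u c ∧ ¬ G.Adj v c) ∨ (¬ G.Adj u c ∧ G.Adj v c)) := by
      unfold TwinEq at hnt
      push_neg at hnt
      obtain ⟨-, h⟩ := hnt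
      obtain ⟨cc, h1, h2, h3⟩ := h
      exact ⟨cc, h1, h2, by tauto⟩
    obtain ⟨c, hcu, hcv, hsplit⟩ := hex
    have hpq : (∃ p ∈ S, G.Adj p c) ∧ (∃ q ∈ S, ¬ G.Adj q c) := by
      rcases hsplit with ⟨h1, h2⟩ | ⟨h1, h2⟩
      · exact ⟨⟨u, hu, h1⟩, ⟨v, hv, h2⟩⟩
      · exact ⟨⟨v, hv, h2⟩, ⟨u, hu, h1⟩⟩
    set St := S.filter (fun s => G.Adj s c) with hSt
    set Sf := S.filter (fun s => ¬ G.Adj s c) with hSf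
    have hsum : St.card + Sf.card = S.card := Finset.card_filter_add_card_filter_not _
    have key : ∃ (S' : Finset V) (a0 : Bool) (z0 : V),
        2 ^ m ≤ S'.card ∧ S' ⊆ S ∧ (∀ s ∈ S', G.Adj s c ↔ a0 = true) ∧
        z0 ∈ S ∧ (G.Adj z0 c ↔ a0 = false) ∧ z0 ≠ c := by
      by_cases hbig : 2 ^ m ≤ St.card
      · rcases hsplit with ⟨h1, h2⟩ | ⟨h1, h2⟩
        · exact ⟨St, true, v, hbig, Finset.filter_subset _ _,
            fun s hs => by simpa using (Finset.mem_filter.1 hs).2, hv, by simp [h2], hcv.symm⟩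
        · exact ⟨St, true, u, hbig, Finset.filter_subset _ _,
            fun s hs => by simpa using (Finset.mem_filter.1 hs).2, hu, by simp [h1], hcu.symm⟩
      · have hbig' : 2 ^ m ≤ Sf.card := by
          have hp : 2 ^ (m+1) = 2 ^ m + 2 ^ m := by ring
          omega
        rcases hsplit with ⟨h1, h2⟩ | ⟨h1, h2⟩
        · exact ⟨Sf, false, u, hbig', Finset.filter_subset _ _,
            fun s hs => by simp [(Finset.mem_filter.1 hs).2], hu, by simp [h1], hcu.symm⟩
        · exact ⟨Sf, false, v, hbig', Finset.filter_subset _ _,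
            fun s hs => by simp [(Finset.mem_filter.1 hs).2], hv, by simp [h2], hcv.symm⟩
    obtain ⟨S', a0, z0, hS'card, hS'sub, hchar, hz0S, hz0adj, hz0c⟩ := key
    have hz0nS' : z0 ∉ S' := by
      intro h
      have h1 := (hchar z0 h)
      rcases a0 with _ | _ <;> simp_all
    obtain ⟨z', c', a', hz'S, hsplit', hz'inj, hc'inj, hzc', hdiag', hoff'⟩ :=
      IH S' (fun x hx y hy h => hS x (hS'sub hx) y (hS'sub hy) h) hS'card
    refine ⟨Fin.cases z0 z', Fin.cases c c', Fin.cases a0 a', ?_, ?_, ?_, ?_, ?_, ?_, ?_⟩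
    · intro i
      rcases Fin.eq_zero_or_eq_succ i with rfl | ⟨j, rfl⟩
      · simpa using hz0S
      · simpa using hS'sub (hz'S j)
    · intro i
      rcases Fin.eq_zero_or_eq_succ i with rfl | ⟨j, rfl⟩
      · obtain ⟨⟨p, hp, h1⟩, ⟨q, hq, h2⟩⟩ := hpq
        simp only [Fin.cases_zero]
        exact ⟨p, hp, q, hq, h1, h2⟩
      · obtain ⟨p, hp, q, hq, h1, h2⟩ := hsplit' j
        simp only [Fin.cases_succ]
        exact ⟨p, hS'sub hp, q, hS'sub hq, h1, h2⟩
    · intro i j hij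
      rcases Fin.eq_zero_or_eq_succ i with rfl | ⟨i', rfl⟩ <;>
        rcases Fin.eq_zero_or_eq_succ j with rfl | ⟨j', rfl⟩
      · rfl
      · exfalso; simp only [Fin.cases_zero, Fin.cases_succ] at hij
        exact hz0nS' (hij ▸ hz'S j')
      · exfalso; simp only [Fin.cases_zero, Fin.cases_succ] at hij
        exact hz0nS' (hij ▸ hz'S i')
      · simp only [Fin.cases_succ] at hij
        exact congrArg Fin.succ (hz'inj hij)
    · intro i j hij
      rcases Fin.eq_zero_or_eq_succ i with rfl | ⟨i', rfl⟩ <;>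
        rcases Fin.eq_zero_or_eq_succ j with rfl | ⟨j', rfl⟩
      · rfl
      · exfalso; simp only [Fin.cases_zero, Fin.cases_succ] at hij
        obtain ⟨p, hp, q, hq, h1, h2⟩ := hsplit' j'
        have hpc := (hchar p hp); have hqc := (hchar q hq)
        rw [hij] at hpc hqc
        rcases a0 with _ | _ <;> simp_all
      · exfalso; simp only [Fin.cases_zero, Fin.cases_succ] at hij
        obtain ⟨p, hp, q, hq, h1, h2⟩ := hsplit' i'
        have hpc := (hchar p hp); have hqc := (hchar q hq)
        rw [← hij] at hpc hqc
        rcases a0 with _ | _ <;> simp_all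
      · simp only [Fin.cases_succ] at hij
        exact congrArg Fin.succ (hc'inj hij)
    · intro i
      rcases Fin.eq_zero_or_eq_succ i with rfl | ⟨j, rfl⟩
      · simpa using hz0c
      · simpa using hzc' j
    · intro i
      rcases Fin.eq_zero_or_eq_succ i with rfl | ⟨j, rfl⟩
      · simpa using hz0adj
      · simpa using hdiag' j
    · intro i j hij
      rcases Fin.eq_zero_or_eq_succ i with rfl | ⟨i', rfl⟩ <;>
        rcases Fin.eq_zero_or_eq_succ j with rfl | ⟨j', rfl⟩
      · exact absurd hij (lt_irrefl _)
      · simp only [Fin.cases_zero, Fin.cases_succ]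
        exact hchar _ (hz'S j')
      · exact absurd hij (by simp [Fin.lt_def])
      · simp only [Fin.cases_succ]
        exact hoff' i' j' (by simpa [Fin.succ_lt_succ_iff] using hij)

lemma hasChain_of_nontwin {G : SimpleGraph V} {m : ℕ} {S : Finset V}
    (hS : ∀ u ∈ S, ∀ v ∈ S, TwinEq G u v → u = v) (hcard : 2 ^ m ≤ S.card) :
    HasChain G m := by
  obtain ⟨z, c, a, _, _, hzi, hci, hzc, hd, ho⟩ := chainIn_of_card m S hS hcard
  exact ⟨z, c, a, hzi, hci, hzc, hd, fun i j hij _ => ho i j hij⟩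

lemma hasChain_map {G : SimpleGraph W} (f : V → W) (hf : Function.Injective f) {m : ℕ}
    (h : HasChain (G.comap f) m) : HasChain G m := by
  obtain ⟨z, c, a, hzi, hci, hzc, hd, ho⟩ := h
  refine ⟨f ∘ z, f ∘ c, a, hf.comp hzi, hf.comp hci, fun i => hf.ne (hzc i),
    fun i => hd i, fun i j hij hne => ?_⟩
  exact ho i j hij (fun hh => hne (by rw [Function.comp_apply, Function.comp_apply, hh]))

lemma hasChain_delete {n : ℕ} {G : SimpleGraph (Fin (n+1))} (v : Fin (n+1)) {m : ℕ}
    (h : HasChain G (m+2)) : HasChain (G.comap v.succAbove) m := by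
  obtain ⟨z, c, a, hzi, hci, hzc, hd, ho⟩ := h
  set B : Finset (Fin (m+2)) :=
    (Finset.univ.filter (fun i => z i = v)) ∪ (Finset.univ.filter (fun i => c i = v)) with hB
  have hB2 : B.card ≤ 2 := by
    have h1 : (Finset.univ.filter (fun i => z i = v)).card ≤ 1 :=
      Finset.card_le_one.2 (fun x hx y hy => by
        simp only [Finset.mem_filter] at hx hy
        exact hzi (hx.2.trans hy.2.symm))
    have h2 : (Finset.univ.filter (fun i => c i = v)).card ≤ 1 :=
      Finset.card_le_one.2 (fun x hx y hy => by
        simp only [Finset.mem_filter] at hx hy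
        exact hci (hx.2.trans hy.2.symm))
    calc B.card ≤ _ + _ := Finset.card_union_le _ _
    _ ≤ 2 := by omega
  have hcompl : m ≤ Bᶜ.card := by
    have := Finset.card_compl B
    simp only [Fintype.card_fin] at this
    omega
  obtain ⟨T, hTsub, hTcard⟩ := Finset.exists_subset_card_eq hcompl
  set e := T.orderIsoOfFin hTcard with he
  set emb : Fin m → Fin (m+2) := fun k => (e k : Fin (m+2)) with hemb
  have hmono : ∀ k l : Fin m, k < l → emb k < emb l := by
    intro k l hkl
    exact Subtype.coe_lt_coe.2 (e.strictMono hkl)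
  have hembinj : Function.Injective emb := by
    intro k l hkl
    exact e.injective (Subtype.ext hkl)
  have hnv : ∀ k, z (emb k) ≠ v ∧ c (emb k) ≠ v := by
    intro k
    have hmem : (emb k) ∈ Bᶜ := hTsub (e k).2
    rw [Finset.mem_compl, hB] at hmem
    simp only [Finset.mem_union, Finset.mem_filter, Finset.mem_univ, true_and] at hmem
    push_neg at hmem
    exact hmem
  have hz' : ∀ k, ∃ j, v.succAbove j = z (emb k) := fun k =>
    Fin.exists_succAbove_eq (hnv k).1
  have hc' : ∀ k, ∃ j, v.succAbove j = c (emb k) := fun k =>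
    Fin.exists_succAbove_eq (hnv k).2
  choose zt hzt using hz'
  choose ct hct using hc'
  have hsAinj : Function.Injective v.succAbove := Fin.succAbove_right_injective
  refine ⟨zt, ct, a ∘ emb, ?_, ?_, ?_, ?_, ?_⟩
  · intro k l h
    apply hembinj
    apply hzi
    rw [← hzt k, ← hzt l, h]
  · intro k l h
    apply hembinj
    apply hci
    rw [← hct k, ← hct l, h]
  · intro k h
    apply hzc (emb k)
    rw [← hzt k, ← hct k, h]
  · intro k
    simp only [SimpleGraph.comap_adj, Function.comp_apply]
    rw [hzt k, hct k]
    exact hd (emb k)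
  · intro k l hkl hne
    simp only [SimpleGraph.comap_adj, Function.comp_apply]
    rw [hzt l, hct k]
    refine ho (emb k) (emb l) (hmono k l hkl) ?_
    rw [← hzt l, ← hct k]
    exact fun hh => hne (hsAinj hh)


lemma four_mul_card_filter [Fintype V] [DecidableEq V] {a b : V} (hab : a ≠ b) :
    4 * (Finset.univ.filter (fun X : Finset V => a ∈ X ∧ b ∉ X)).card
      = 2 ^ Fintype.card V := by
  classical
  -- the filtered set is in bijection with the powerset of univ \ {a, b}
  have hcard : (Finset.univ.filter (fun X : Finset V => a ∈ X ∧ b ∉ X)).card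
      = ((Finset.univ \ {a, b} : Finset V).powerset).card := by
    refine Finset.card_bij' (fun X _ => X.erase a) (fun S _ => insert a S) ?hi ?hj ?li ?ri
    case hi =>
      intro X hX
      simp only [Finset.mem_filter, Finset.mem_univ, true_and] at hX
      simp only [Finset.mem_powerset]
      intro x hx
      simp only [Finset.mem_erase] at hx
      simp only [Finset.mem_sdiff, Finset.mem_univ, true_and, Finset.mem_insert,
        Finset.mem_singleton]
      rintro (h | h)
      · exact hx.1 h
      · exact hX.2 (h ▸ hx.2)
    case hj =>
      intro S hS
      simp only [Finset.mem_powerset] at hS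
      simp only [Finset.mem_filter, Finset.mem_univ, true_and]
      constructor
      · exact Finset.mem_insert_self a S
      · intro hb
        rcases Finset.mem_insert.1 hb with h | h
        · exact hab h.symm
        · have := hS h
          simp [Finset.mem_sdiff] at this
    case li =>
      intro X hX
      simp only [Finset.mem_filter, Finset.mem_univ, true_and] at hX
      exact Finset.insert_erase hX.1
    case ri =>
      intro S hS
      simp only [Finset.mem_powerset] at hS
      apply Finset.erase_insert
      intro h
      have := hS h
      simp [Finset.mem_sdiff] at this
  rw [hcard, Finset.card_powerset]
  have h2 : 2 ≤ Fintype.card V := by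
    have : ({a, b} : Finset V).card = 2 := Finset.card_pair hab
    calc 2 = ({a, b} : Finset V).card := this.symm
    _ ≤ Fintype.card V := Finset.card_le_univ _
  have hcard2 : (Finset.univ \ {a, b} : Finset V).card = Fintype.card V - 2 := by
    rw [Finset.card_sdiff_of_subset (Finset.subset_univ _), Finset.card_pair hab, Finset.card_univ]
  rw [hcard2]
  have : (4 : ℕ) = 2 ^ 2 := by norm_num
  rw [this, ← pow_add]
  congr 1
  omega

lemma card_le_cutRank_succ [Fintype V] [DecidableEq V] {G : SimpleGraph V} {m : ℕ}
    (z c : Fin m → V) (a : Fin m → Bool)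
    (hd : ∀ i, G.Adj (z i) (c i) ↔ a i = false)
    (ho : ∀ i j, i < j → z j ≠ c i → (G.Adj (z j) (c i) ↔ a i = true))
    (X : Finset V) :
    (Finset.univ.filter (fun i : Fin m => z i ∈ X ∧ c i ∉ X)).card ≤ cutRank G X + 1 := by
  classical
  set I := Finset.univ.filter (fun i : Fin m => z i ∈ X ∧ c i ∉ X) with hI
  set t := I.card with ht
  set M : Matrix (X : Finset V) ((Xᶜ : Finset V)) (ZMod 2) :=
    Matrix.of fun (i : X) (j : (Xᶜ : Finset V)) =>
      if G.Adj i.1 j.1 then (1 : ZMod 2) else 0 with hM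
  have hrank : cutRank G X = M.rank := rfl
  -- the order iso enumerating I
  set e := I.orderIsoOfFin rfl with he
  have hidx_mem : ∀ k : Fin t, z (e k : Fin m) ∈ X ∧ c (e k : Fin m) ∉ X := by
    intro k
    exact (Finset.mem_filter.1 (e k).2).2
  have hidx_mono : ∀ {k l : Fin t}, k < l → (e k : Fin m) < (e l : Fin m) := by
    intro k l hkl
    exact Subtype.coe_lt_coe.2 (e.strictMono hkl)
  -- rows
  set zX : Fin t → (X : Finset V) := fun k => ⟨z (e k : Fin m), (hidx_mem k).1⟩ with hzX
  set cX : Fin t → ((Xᶜ : Finset V) : Finset V) := fun k =>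
    ⟨c (e k : Fin m), Finset.mem_compl.2 (hidx_mem k).2⟩ with hcX
  -- difference vectors
  have htt : ∀ k : Fin (t - 1), (k : ℕ) < t := fun k => by omega
  have htt' : ∀ k : Fin (t - 1), (k : ℕ) + 1 < t := fun k => by
    have := k.2; omega
  set d : Fin (t - 1) → (((Xᶜ : Finset V) : Finset V) → ZMod 2) :=
    fun k => M (zX ⟨k, htt k⟩) + M (zX ⟨(k : ℕ) + 1, htt' k⟩) with hd2
  -- entries of M at chain positions
  have hentry_off : ∀ (k l : Fin t), k < l → M (zX l) (cX k) = if a (e k : Fin m) = true then 1 else 0 := by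
    intro k l hkl
    have hne : z (e l : Fin m) ≠ c (e k : Fin m) := by
      intro h
      exact (hidx_mem k).2 (h ▸ (hidx_mem l).1)
    have := ho (e k : Fin m) (e l : Fin m) (hidx_mono hkl) hne
    show (if G.Adj (z (e l : Fin m)) (c (e k : Fin m)) then (1 : ZMod 2) else 0) = _
    by_cases hadj : G.Adj (z (e l : Fin m)) (c (e k : Fin m))
    · rw [if_pos hadj, if_pos (this.1 hadj)]
    · rw [if_neg hadj, if_neg (fun hh => hadj (this.2 hh))]
  have hentry_diag : ∀ (k : Fin t), M (zX k) (cX k) = if a (e k : Fin m) = false then 1 else 0 := by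
    intro k
    have := hd (e k : Fin m)
    show (if G.Adj (z (e k : Fin m)) (c (e k : Fin m)) then (1 : ZMod 2) else 0) = _
    by_cases hadj : G.Adj (z (e k : Fin m)) (c (e k : Fin m))
    · rw [if_pos hadj, if_pos (this.1 hadj)]
    · rw [if_neg hadj, if_neg (fun hh => hadj (this.2 hh))]
  -- linear independence of the difference vectors
  have hli : LinearIndependent (ZMod 2) d := by
    rw [Fintype.linearIndependent_iff]
    intro g hg
    by_contra hne
    push_neg at hne
    obtain ⟨k, hk⟩ := hne
    set s := Finset.univ.filter (fun k => g k ≠ 0) with hs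
    have hsne : s.Nonempty := ⟨k, by simp [hs, hk]⟩
    set k0 := s.min' hsne with hk0
    have hk0mem : g k0 ≠ 0 := (Finset.mem_filter.1 (s.min'_mem hsne)).2
    have hlt : ∀ l : Fin (t-1), l < k0 → g l = 0 := by
      intro l hl
      by_contra hgl
      have : l ∈ s := by simp [hs, hgl]
      exact absurd (s.min'_le l this) (not_le.2 hl)
    -- evaluate at the diagonal column of k0
    have heval := congrFun hg (cX ⟨k0, htt k0⟩)
    simp only [Finset.sum_apply, Pi.smul_apply, Pi.zero_apply] at heval
    have hterm : ∀ l : Fin (t-1), l ≠ k0 →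
        g l • d l (cX ⟨(k0 : ℕ), htt k0⟩) = 0 := by
      intro l hl
      rcases lt_or_gt_of_ne hl with hlt' | hgt
      · rw [hlt l hlt', zero_smul]
      · -- l > k0 : both rows are strictly above the column index
        have h1 : (⟨(k0 : ℕ), htt k0⟩ : Fin t) < ⟨(l : ℕ), htt l⟩ := by
          simp only [Fin.mk_lt_mk]
          exact_mod_cast hgt
        have h2 : (⟨(k0 : ℕ), htt k0⟩ : Fin t) < ⟨(l : ℕ) + 1, htt' l⟩ := by
          simp only [Fin.mk_lt_mk]
          have : (k0 : ℕ) < (l : ℕ) := by exact_mod_cast hgt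
          omega
        have h11 : (1 : ZMod 2) + 1 = 0 := by decide
        rw [hd2]
        simp only [Pi.add_apply]
        rw [hentry_off _ _ h1, hentry_off _ _ h2]
        rcases ha : a ((e ⟨(k0 : ℕ), htt k0⟩ : {x // x ∈ I}) : Fin m) with _ | _ <;>
          simp [ha, h11]
    rw [Finset.sum_eq_single_of_mem k0 (Finset.mem_univ _) (fun l _ hl => hterm l hl)] at heval
    -- diagonal term
    have hdiagval : d k0 (cX ⟨(k0 : ℕ), htt k0⟩) = 1 := by
      rw [hd2]
      simp only [Pi.add_apply]
      have h2 : (⟨(k0 : ℕ), htt k0⟩ : Fin t) < ⟨(k0 : ℕ) + 1, htt' k0⟩ := by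
        simp only [Fin.mk_lt_mk]; omega
      rw [hentry_diag ⟨(k0 : ℕ), htt k0⟩, hentry_off _ _ h2]
      rcases ha : a ((e ⟨(k0 : ℕ), htt k0⟩ : {x // x ∈ I}) : Fin m) with _ | _ <;> simp [ha]
    rw [hdiagval, smul_eq_mul, mul_one] at heval
    exact hk0mem heval
  -- rank bound
  have hspan : Submodule.span (ZMod 2) (Set.range d) ≤
      Submodule.span (ZMod 2) (Set.range M) := by
    rw [Submodule.span_le]
    rintro x ⟨k, rfl⟩
    rw [hd2]
    exact Submodule.add_mem _ (Submodule.subset_span ⟨_, rfl⟩)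
      (Submodule.subset_span ⟨_, rfl⟩)
  have hfr : t - 1 ≤ M.rank := by
    have h1 : Module.finrank (ZMod 2)
        (Submodule.span (ZMod 2) (Set.range d)) = t - 1 := by
      rw [finrank_span_eq_card hli, Fintype.card_fin]
    have h2 := Submodule.finrank_mono (M := ((Xᶜ : Finset V) : Finset V) → ZMod 2) hspan
    rw [h1] at h2
    rw [Matrix.rank_eq_finrank_span_row]; exact h2
  omega


lemma le_avg_of_hasChain [Fintype V] [DecidableEq V] {G : SimpleGraph V} {m : ℕ}
    (h : HasChain G m) : (m : ℝ) ≤ 4 * avgCutRank G + 4 := by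
  classical
  obtain ⟨z, c, a, hzi, hci, hzc, hdg, ho⟩ := h
  set N := Fintype.card V with hN
  have hswap : ∑ X : Finset V,
        (Finset.univ.filter (fun i : Fin m => z i ∈ X ∧ c i ∉ X)).card
      = ∑ i : Fin m, (Finset.univ.filter (fun X : Finset V => z i ∈ X ∧ c i ∉ X)).card := by
    simp only [Finset.card_filter]
    exact Finset.sum_comm
  have hcount : 4 * ∑ X : Finset V,
      (Finset.univ.filter (fun i : Fin m => z i ∈ X ∧ c i ∉ X)).card = m * 2 ^ N := by
    rw [hswap, Finset.mul_sum]
    rw [Finset.sum_congr rfl (fun i _ => four_mul_card_filter (hzc i))]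
    simp [Finset.sum_const, hN, mul_comm]
  have hle : ∑ X : Finset V,
      (Finset.univ.filter (fun i : Fin m => z i ∈ X ∧ c i ∉ X)).card
      ≤ (∑ X : Finset V, cutRank G X) + 2 ^ N := by
    calc ∑ X : Finset V, (Finset.univ.filter (fun i : Fin m => z i ∈ X ∧ c i ∉ X)).card
        ≤ ∑ X : Finset V, (cutRank G X + 1) :=
          Finset.sum_le_sum (fun X _ => card_le_cutRank_succ z c a hdg ho X)
      _ = (∑ X : Finset V, cutRank G X) + 2 ^ N := by
          rw [Finset.sum_add_distrib]
          congr 1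
          simp only [Finset.sum_const, Finset.card_univ, smul_eq_mul, mul_one]
          rw [Fintype.card_finset]
  set S : ℕ := ∑ X : Finset V, cutRank G X with hS
  have hfinN : m * 2 ^ N ≤ 4 * S + 4 * 2 ^ N := by
    calc m * 2 ^ N = 4 * ∑ X : Finset V,
          (Finset.univ.filter (fun i : Fin m => z i ∈ X ∧ c i ∉ X)).card := hcount.symm
      _ ≤ 4 * (S + 2 ^ N) := by
          apply Nat.mul_le_mul_left
          exact hle
      _ = 4 * S + 4 * 2 ^ N := by ring
  have hfin : (m : ℝ) * 2 ^ N ≤ 4 * S + 4 * 2 ^ N := by exact_mod_cast hfinN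
  have h2N : (0 : ℝ) < 2 ^ N := by positivity
  have havg : avgCutRank G = (S : ℝ) / 2 ^ N := by
    rw [avgCutRank, ← hN, hS]
    congr 1
    rw [Nat.cast_sum]
  rw [havg]
  calc (m : ℝ) = (m * 2 ^ N) / 2 ^ N := by field_simp
    _ ≤ (4 * S + 4 * 2 ^ N) / 2 ^ N := by gcongr
    _ = 4 * ((S : ℝ) / 2 ^ N) + 4 := by field_simp


lemma isPWO_pi : ∀ {K : ℕ}, (Set.univ : Set (Fin K → ℕ)).IsPWO := by
  intro K
  induction K with
  | zero =>
    rw [Set.isPWO_iff_exists_monotone_subseq]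
    intro f _
    refine ⟨OrderEmbedding.ofStrictMono id strictMono_id, ?_⟩
    intro a b _
    exact le_of_eq (Subsingleton.elim _ _)
  | succ K IH =>
    rw [Set.isPWO_iff_exists_monotone_subseq]
    intro f _
    set f1 : ℕ → (Fin K → ℕ) := fun m => (f m) ∘ Fin.castSucc with hf1
    obtain ⟨g1, hg1⟩ := Set.isPWO_iff_exists_monotone_subseq.1 IH f1 (fun _ => Set.mem_univ _)
    have hNpwo : (Set.univ : Set ℕ).IsPWO := by
      rw [Set.isPWO_iff_isWF]
      exact Set.isWF_univ_iff.2 inferInstance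
    set f2 : ℕ → ℕ := fun m => f (g1 m) (Fin.last K) with hf2
    obtain ⟨g2, hg2⟩ := hNpwo.exists_monotone_subseq (f := f2) (fun _ => Set.mem_univ _)
    refine ⟨g2.trans g1, ?_⟩
    intro a b hab
    intro i
    induction i using Fin.lastCases with
    | last => exact hg2 hab
    | cast j => exact hg1 (g2.monotone hab) j

lemma antichain_finite {K : ℕ} (A : Set (Fin K → ℕ))
    (hA : ∀ a ∈ A, ∀ b ∈ A, a ≤ b → a = b) : A.Finite := by
  by_contra hinf
  have hinf' : A.Infinite := hinf
  set f := hinf'.natEmbedding with hfdef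
  obtain ⟨m, n, hmn, hle⟩ := isPWO_pi (fun k => ⟨(f k : Fin K → ℕ), Set.mem_univ _⟩)
  have heq : (f m : Fin K → ℕ) = f n := hA _ (f m).2 _ (f n).2 hle
  have : f m = f n := Subtype.ext heq
  exact (Nat.ne_of_lt hmn) (f.injective this)



def Obs (C : Set GraphOn) : Set GraphOn :=
  {H | H ∉ C ∧ ∀ B : GraphOn, B.1 < H.1 → Emb B H → B ∈ C}

lemma exists_min_obs (C : Set GraphOn) :
    ∀ (N : ℕ) (G : GraphOn), G.1 ≤ N → G ∉ C → ∃ H ∈ Obs C, Emb H G := by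
  intro N
  induction N with
  | zero =>
    intro G _ hGC
    exact ⟨G, ⟨hGC, fun B hB _ => absurd hB (by omega)⟩, emb_refl G⟩
  | succ N IH =>
    intro G hG hGC
    by_cases hmin : ∀ B : GraphOn, B.1 < G.1 → Emb B G → B ∈ C
    · exact ⟨G, ⟨hGC, hmin⟩, emb_refl G⟩
    · push_neg at hmin
      obtain ⟨B, hB1, hB2, hB3⟩ := hmin
      obtain ⟨H, hH, hemb⟩ := IH B (by omega) hB3
      exact ⟨H, hH, emb_trans hemb hB2⟩

noncomputable def codeOf (K : ℕ) (H : GraphOn) :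
    ℕ × (Fin K → Fin K → Bool) × (Fin K → Bool) × (Fin K → ℕ) :=
  (qq H.2, adjB K H.2, labB K H.2, sigK K H.2)

lemma qq_le {n : ℕ} (G : SimpleGraph (Fin n)) : qq G ≤ n := by
  calc qq G = (DD G).card := rfl
  _ ≤ (Finset.univ : Finset (Fin n)).card := Finset.card_le_univ _
  _ = n := by simp

lemma emb_of_code_eq {K : ℕ} {H1 H2 : GraphOn} (hq1 : qq H1.2 ≤ K) (hq2 : qq H2.2 ≤ K)
    (h : codeOf K H1 = codeOf K H2) : Emb H1 H2 := by
  simp only [codeOf, Prod.mk.injEq] at h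
  obtain ⟨hq, hadj, hlab, hsig⟩ := h
  obtain ⟨f, hfinj, hfadj, -⟩ :=
    embed_of_code K hq1 hq2 hq hadj hlab (fun i => le_of_eq (congrFun hsig i))
  exact ⟨f, hfinj, hfadj⟩


/-- A hereditary, isomorphism-closed class of graphs of bounded
average cut-rank is characterized by finitely many forbidden induced subgraphs. -/
theorem stmt16 (C : Set GraphOn)
    (hiso : ∀ A ∈ C, ∀ B : GraphOn, Nonempty (B.2 ≃g A.2) → B ∈ C)
    (hind : ∀ A ∈ C, ∀ B : GraphOn, IsIndSubgraph B A → B ∈ C)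
    (α : ℝ) (hb : ∀ A ∈ C, avgCutRank A.2 ≤ α) :
    ∃ L : Finset GraphOn, ∀ G : GraphOn,
      G ∈ C ↔ ∀ H ∈ L, ¬ IsIndSubgraph H G := by
  classical
  set m0 : ℕ := ⌈4*α+5⌉₊ with hm0
  set K : ℕ := 2 ^ (m0 + 2) with hK
  have hnochainC : ∀ A ∈ C, ¬ HasChain A.2 m0 := by
    intro A hA hch
    have h1 := le_avg_of_hasChain hch
    have h2 := hb A hA
    have h3 : (4*α+5 : ℝ) ≤ (m0 : ℝ) := Nat.le_ceil _
    linarith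
  have hobsq : ∀ H ∈ Obs C, qq H.2 ≤ K := by
    rintro ⟨n, Gr⟩ ⟨hH1, hH2⟩
    by_contra hq
    push_neg at hq
    have hq' : K < qq Gr := hq
    have hchain : HasChain Gr (m0 + 2) :=
      hasChain_of_nontwin (fun u hu v hv h => DD_pairwise_nontwin hu hv h) (le_of_lt hq')
    have hK1 : 0 < K := pow_pos (by norm_num) _
    have hn1 : 1 ≤ n := by
      have := qq_le Gr
      omega
    obtain ⟨n', rfl⟩ : ∃ n', n = n' + 1 := ⟨n - 1, by omega⟩
    set B : GraphOn := ⟨n', SimpleGraph.comap (Fin.succAbove (0 : Fin (n'+1))) Gr⟩ with hB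
    have hBemb : Emb B ⟨n'+1, Gr⟩ :=
      ⟨Fin.succAbove 0, Fin.succAbove_right_injective, fun u v => Iff.rfl⟩
    have hBC : B ∈ C := hH2 B (by exact Nat.lt_succ_self n') hBemb
    exact hnochainC B hBC (hasChain_delete 0 hchain)
  set CS : Set (ℕ × (Fin K → Fin K → Bool) × (Fin K → Bool) × (Fin K → ℕ)) :=
    codeOf K '' Obs C with hCS
  have hCSfin : CS.Finite := by
    set P0 : Set (ℕ × (Fin K → Fin K → Bool) × (Fin K → Bool)) :=
      (Set.Iic K) ×ˢ (Set.univ) ×ˢ (Set.univ) with hP0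
    have hP0fin : P0.Finite := (Set.finite_Iic K).prod (Set.finite_univ.prod Set.finite_univ)
    have hcover : CS ⊆ ⋃ p ∈ P0,
        (fun sv => (p.1, p.2.1, p.2.2, sv)) '' {sv | (p.1, p.2.1, p.2.2, sv) ∈ CS} := by
      rintro x ⟨H, hH, rfl⟩
      apply Set.mem_biUnion
        (show ((qq H.2, adjB K H.2, labB K H.2) :
            ℕ × (Fin K → Fin K → Bool) × (Fin K → Bool)) ∈ P0 from
          ⟨hobsq H hH, Set.mem_univ _, Set.mem_univ _⟩)
      exact ⟨sigK K H.2, ⟨H, hH, rfl⟩, rfl⟩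
    refine Set.Finite.subset (Set.Finite.biUnion hP0fin ?_) hcover
    intro p _
    apply Set.Finite.image
    apply antichain_finite
    intro s1 hs1 s2 hs2 hle
    obtain ⟨H1, hH1o, hc1⟩ := hs1
    obtain ⟨H2, hH2o, hc2⟩ := hs2
    simp only [codeOf, Prod.mk.injEq] at hc1 hc2
    obtain ⟨e1q, e1a, e1l, e1s⟩ := hc1
    obtain ⟨e2q, e2a, e2l, e2s⟩ := hc2
    have hq1 := hobsq H1 hH1o
    have hq2 := hobsq H2 hH2o
    have hqq : qq H1.2 = qq H2.2 := by rw [e1q, e2q]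
    have haa : adjB K H1.2 = adjB K H2.2 := by rw [e1a, e2a]
    have hll : labB K H1.2 = labB K H2.2 := by rw [e1l, e2l]
    have hss : ∀ i, sigK K H1.2 i ≤ sigK K H2.2 i := by
      intro i
      rw [e1s, e2s]
      exact hle i
    obtain ⟨f, hfinj, hfadj, -⟩ := embed_of_code K hq1 hq2 hqq haa hll hss
    have hembH : Emb H1 H2 := ⟨f, hfinj, hfadj⟩
    have hcard : H1.1 = H2.1 := by
      have hle1 : H1.1 ≤ H2.1 := by
        have := Fintype.card_le_of_injective f hfinj
        simpa using this
      rcases lt_or_eq_of_le hle1 with hlt | heq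
      · exact absurd (hH2o.2 H1 hlt hembH) hH1o.1
      · exact heq
    have hsum1 : ∑ i : Fin K, sigK K H1.2 i = H1.1 := sum_sigK K hq1
    have hsum2 : ∑ i : Fin K, sigK K H2.2 i = H2.1 := sum_sigK K hq2
    have hsumeq : ∑ i : Fin K, sigK K H1.2 i = ∑ i : Fin K, sigK K H2.2 i := by
      rw [hsum1, hsum2]
      exact hcard
    have hpt := (Finset.sum_eq_sum_iff_of_le (fun i _ => hss i)).1 hsumeq
    rw [← e1s, ← e2s]
    funext i
    exact hpt i (Finset.mem_univ i)
  have hsec : ∀ p ∈ CS, ∃ H, H ∈ Obs C ∧ codeOf K H = p := by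
    rintro p ⟨H, hH, rfl⟩
    exact ⟨H, hH, rfl⟩
  set pick : (ℕ × (Fin K → Fin K → Bool) × (Fin K → Bool) × (Fin K → ℕ)) → GraphOn :=
    fun p => if hp : p ∈ CS then (hsec p hp).choose else ⟨0, ⊥⟩ with hpick
  refine ⟨hCSfin.toFinset.image pick, ?_⟩
  intro G
  constructor
  · intro hGC H hHL hindH
    have hHobs : H ∈ Obs C := by
      obtain ⟨p, hpmem, rfl⟩ := Finset.mem_image.1 hHL
      have hp : p ∈ CS := hCSfin.mem_toFinset.1 hpmem
      rw [hpick]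
      simp only [dif_pos hp]
      exact ((hsec p hp).choose_spec).1
    exact hHobs.1 (hind G hGC H hindH)
  · intro hforb
    by_contra hGn
    obtain ⟨H, hHobs, hembHG⟩ := exists_min_obs C G.1 G le_rfl hGn
    have hpCS : codeOf K H ∈ CS := ⟨H, hHobs, rfl⟩
    have hH0spec : pick (codeOf K H) ∈ Obs C ∧ codeOf K (pick (codeOf K H)) = codeOf K H := by
      rw [hpick]
      simp only [dif_pos hpCS]
      exact (hsec _ hpCS).choose_spec
    have hH0L : pick (codeOf K H) ∈ hCSfin.toFinset.image pick :=
      Finset.mem_image.2 ⟨codeOf K H, hCSfin.mem_toFinset.2 hpCS, rfl⟩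
    have hembH0H : Emb (pick (codeOf K H)) H :=
      emb_of_code_eq (hobsq _ hH0spec.1) (hobsq H hHobs) hH0spec.2
    exact hforb _ hH0L (indSubgraph_iff_emb.2 (emb_trans hembH0H hembHG))


end AvgCutRank
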